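/- Let (X_p)_p, indexed by the primes, be independent random variables on a probability space (Ω, P), each distributed according to the probability Haar measure on SU₂(ℂ). For ν ≥ 0 let U_ν be the polynomial determined by U_ν(2cos θ) = sin((ν+1)θ)/sin θ, and for n ≥ 1 set Y_n = ∏_{p^ν ∥ n} U_ν(Tr X_p). Then for all squarefree positive integers n and m one has E(Y_n Y_m) = 1 if n = m and E(Y_n Y_m) = 0 if n ≠ m. -/

import Mathlib

open MeasureTheory ProbabilityTheory Filter

noncomputable section

/-- `SU₂(ℂ)`: the group of 2×2 complex unitary matrices of determinant 1. -/
abbrev SU2 := Matrix.specialUnitaryGroup (Fin 2) ℂ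

noncomputable instance : MeasurableSpace SU2 := borel SU2

instance : BorelSpace SU2 := ⟨rfl⟩

instance : Group SU2 :=
  { (inferInstance : Monoid SU2) with
    inv := fun A => ⟨star (A : Matrix (Fin 2) (Fin 2) ℂ), by
      obtain ⟨h1, h2⟩ := Matrix.mem_specialUnitaryGroup_iff.mp A.2
      refine Matrix.mem_specialUnitaryGroup_iff.mpr ⟨Unitary.star_mem h1, ?_⟩
      show Matrix.det (star (A : Matrix (Fin 2) (Fin 2) ℂ)) = 1
      rw [Matrix.star_eq_conjTranspose, Matrix.det_conjTranspose, h2, star_one]⟩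
    inv_mul_cancel := fun A => Subtype.ext (Unitary.star_mul_self_of_mem A.2.1) }

/-- The (real) trace of an element of `SU₂(ℂ)`; the trace of a unitary matrix with
determinant 1 is real, and we take its real part. -/
def rtr (x : SU2) : ℝ := (Matrix.trace (x : Matrix (Fin 2) (Fin 2) ℂ)).re

/-- The polynomial `U_ν` determined by `U_ν(2 cos θ) = sin((ν+1)θ)/sin θ`
(a rescaled Chebyshev polynomial of the second kind). -/
def chebU (ν : ℕ) (x : ℝ) : ℝ := (Polynomial.Chebyshev.U ℝ (ν : ℤ)).eval (x / 2)

/-- `Yn x n = ∏_{p^ν ∥ n} U_ν(Tr x_p)`, the product being over the prime powers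
exactly dividing `n`. -/
def Yn (x : ℕ → SU2) (n : ℕ) : ℝ :=
  ∏ p ∈ n.primeFactors, chebU (n.factorization p) (rtr (x p))

/-! ### Auxiliary material -/

open Matrix

def g1 : SU2 := ⟨-1, by
  refine Matrix.mem_specialUnitaryGroup_iff.mpr ⟨?_, by simp [Matrix.det_neg]⟩
  rw [Unitary.mem_iff]
  constructor <;> simp⟩

def g2 : SU2 := ⟨!![Complex.I, 0; 0, -Complex.I], by
  refine Matrix.mem_specialUnitaryGroup_iff.mpr ⟨?_, by simp [Matrix.det_fin_two_of]⟩
  rw [Unitary.mem_iff]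
  constructor <;>
  · ext i j
    fin_cases i <;> fin_cases j <;>
      simp [Matrix.star_eq_conjTranspose, Matrix.mul_apply, Fin.sum_univ_two,
        Matrix.conjTranspose_apply, Matrix.one_apply, Complex.ext_iff]⟩

def g3 : SU2 := ⟨!![0, 1; -1, 0], by
  refine Matrix.mem_specialUnitaryGroup_iff.mpr ⟨?_, by simp [Matrix.det_fin_two_of]⟩
  rw [Unitary.mem_iff]
  constructor <;>
  · ext i j
    fin_cases i <;> fin_cases j <;>
      simp [Matrix.star_eq_conjTranspose, Matrix.mul_apply, Fin.sum_univ_two,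
        Matrix.conjTranspose_apply, Matrix.one_apply, Complex.ext_iff]⟩

def ent (i j : Fin 2) (x : SU2) : ℂ := (x : Matrix (Fin 2) (Fin 2) ℂ) i j

lemma ent_continuous (i j : Fin 2) : Continuous (ent i j) :=
  (continuous_apply j).comp ((continuous_apply i).comp continuous_subtype_val)

lemma ent_mul (g x : SU2) (i j : Fin 2) :
    ent i j (g * x) = ent i 0 g * ent 0 j x + ent i 1 g * ent 1 j x := by
  show ((g : Matrix (Fin 2) (Fin 2) ℂ) * (x : Matrix (Fin 2) (Fin 2) ℂ)) i j = _
  rw [Matrix.mul_apply, Fin.sum_univ_two]; rfl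

lemma su2_conjTranspose (x : SU2) :
    (x : Matrix (Fin 2) (Fin 2) ℂ)ᴴ = Matrix.adjugate (x : Matrix (Fin 2) (Fin 2) ℂ) := by
  have h1 : (x : Matrix (Fin 2) (Fin 2) ℂ)ᴴ * (x : Matrix (Fin 2) (Fin 2) ℂ) = 1 :=
    Unitary.star_mul_self_of_mem x.2.1
  have hd : (x : Matrix (Fin 2) (Fin 2) ℂ).det = 1 := x.2.2
  have h2 : (x : Matrix (Fin 2) (Fin 2) ℂ) * Matrix.adjugate (x : Matrix (Fin 2) (Fin 2) ℂ) = 1 := by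
    rw [Matrix.mul_adjugate, hd, one_smul]
  calc (x : Matrix (Fin 2) (Fin 2) ℂ)ᴴ
      = (x : Matrix (Fin 2) (Fin 2) ℂ)ᴴ *
        ((x : Matrix (Fin 2) (Fin 2) ℂ) * Matrix.adjugate (x : Matrix (Fin 2) (Fin 2) ℂ)) := by
        rw [h2, mul_one]
    _ = ((x : Matrix (Fin 2) (Fin 2) ℂ)ᴴ * (x : Matrix (Fin 2) (Fin 2) ℂ)) *
        Matrix.adjugate (x : Matrix (Fin 2) (Fin 2) ℂ) := by rw [mul_assoc]
    _ = Matrix.adjugate (x : Matrix (Fin 2) (Fin 2) ℂ) := by rw [h1, one_mul]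

lemma su2_entries (x : SU2) :
    ent 1 1 x = starRingEnd ℂ (ent 0 0 x) ∧ ent 1 0 x = - starRingEnd ℂ (ent 0 1 x) := by
  have h := su2_conjTranspose x
  have h00 := congrFun (congrFun h 0) 0
  have h01 := congrFun (congrFun h 0) 1
  rw [Matrix.adjugate_fin_two, Matrix.conjTranspose_apply] at h00 h01
  simp only [Matrix.of_apply, Matrix.cons_val', Matrix.cons_val_zero, Matrix.cons_val_one,
    Matrix.head_cons, Matrix.empty_val', Matrix.cons_val_fin_one, Matrix.head_fin_const,
    Matrix.star_apply, RCLike.star_def] at h00 h01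
  refine ⟨h00.symm, ?_⟩
  have := congrArg (starRingEnd ℂ) h01
  rw [Complex.conj_conj, map_neg] at this
  exact this

lemma su2_norm_row (x : SU2) :
    Complex.normSq (ent 0 0 x) + Complex.normSq (ent 0 1 x) = 1 := by
  have h1 : (x : Matrix (Fin 2) (Fin 2) ℂ) * (x : Matrix (Fin 2) (Fin 2) ℂ)ᴴ = 1 := by
    have := (Unitary.mem_iff.mp x.2.1).2
    rwa [Matrix.star_eq_conjTranspose] at this
  have h := congrFun (congrFun h1 0) 0
  rw [Matrix.mul_apply, Fin.sum_univ_two] at h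
  simp only [Matrix.conjTranspose_apply, Matrix.one_apply_eq, Matrix.star_apply,
    RCLike.star_def] at h
  have h2 := congrArg Complex.re h
  simpa [Complex.mul_conj, ← Complex.ofReal_add, Complex.normSq, ent] using h2

lemma rtr_eq (x : SU2) : rtr x = 2 * (ent 0 0 x).re := by
  have h := (su2_entries x).1
  unfold rtr
  rw [Matrix.trace_fin_two]
  show (ent 0 0 x + ent 1 1 x).re = _
  rw [h, Complex.add_re, Complex.conj_re]; ring

lemma rtr_continuous : Continuous rtr :=
  Complex.continuous_re.comp (Continuous.matrix_trace continuous_subtype_val)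

lemma integrable_of_bound (μ : Measure SU2) [IsProbabilityMeasure μ] (f : SU2 → ℝ)
    (hf : Continuous f) (C : ℝ) (h : ∀ x, ‖f x‖ ≤ C) : Integrable f μ :=
  ⟨hf.measurable.aestronglyMeasurable, HasFiniteIntegral.of_bounded (C := C) (ae_of_all _ h)⟩

lemma sq_re_le (z : ℂ) : z.re ^ 2 ≤ Complex.normSq z := by
  have := sq_nonneg z.im
  simp only [Complex.normSq_apply]; nlinarith

lemma sq_im_le (z : ℂ) : z.im ^ 2 ≤ Complex.normSq z := by
  have := sq_nonneg z.re
  simp only [Complex.normSq_apply]; nlinarith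

lemma normSq_ent_le (x : SU2) (j : Fin 2) : Complex.normSq (ent 0 j x) ≤ 1 := by
  have h := su2_norm_row x
  have h0 := Complex.normSq_nonneg (ent 0 0 x)
  have h1 := Complex.normSq_nonneg (ent 0 1 x)
  fin_cases j <;> simp <;> nlinarith

lemma integral_rtr_eq_zero (μ : Measure SU2) (hHaar : μ.IsHaarMeasure) :
    ∫ x, rtr x ∂μ = 0 := by
  haveI := hHaar.toIsMulLeftInvariant
  have h := integral_mul_left_eq_self (μ := μ) rtr g1
  have heq : ∀ x : SU2, rtr (g1 * x) = - rtr x := by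
    intro x
    have hm : ((g1 * x : SU2) : Matrix (Fin 2) (Fin 2) ℂ) = -(x : Matrix (Fin 2) (Fin 2) ℂ) := by
      show ((-1 : Matrix (Fin 2) (Fin 2) ℂ) * (x : Matrix (Fin 2) (Fin 2) ℂ)) = _
      rw [neg_one_mul]
    unfold rtr
    rw [hm, Matrix.trace_neg, Complex.neg_re]
  rw [show (fun x : SU2 => rtr (g1 * x)) = fun x => - rtr x from funext heq,
    integral_neg] at h
  linarith

lemma integral_rtr_sq_eq_one (μ : Measure SU2) (hHaar : μ.IsHaarMeasure)
    [IsProbabilityMeasure μ] : ∫ x, rtr x ^ 2 ∂μ = 1 := by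
  haveI := hHaar.toIsMulLeftInvariant
  set f1 : SU2 → ℝ := fun x => (ent 0 0 x).re ^ 2 with hf1
  set f2 : SU2 → ℝ := fun x => (ent 0 0 x).im ^ 2 with hf2
  set f3 : SU2 → ℝ := fun x => (ent 0 1 x).re ^ 2 with hf3
  set f4 : SU2 → ℝ := fun x => (ent 0 1 x).im ^ 2 with hf4
  have hc1 : Continuous f1 := (Complex.continuous_re.comp (ent_continuous 0 0)).pow 2
  have hc2 : Continuous f2 := (Complex.continuous_im.comp (ent_continuous 0 0)).pow 2
  have hc3 : Continuous f3 := (Complex.continuous_re.comp (ent_continuous 0 1)).pow 2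
  have hc4 : Continuous f4 := (Complex.continuous_im.comp (ent_continuous 0 1)).pow 2
  have hb : ∀ (f : SU2 → ℝ), (∀ x, ‖f x‖ ≤ 1) → Continuous f → Integrable f μ :=
    fun f h hc => integrable_of_bound μ f hc 1 h
  have hb1 : Integrable f1 μ := hb f1 (fun x => by
    rw [Real.norm_eq_abs, abs_of_nonneg (sq_nonneg _)]
    exact le_trans (sq_re_le _) (normSq_ent_le x 0)) hc1
  have hb2 : Integrable f2 μ := hb f2 (fun x => by
    rw [Real.norm_eq_abs, abs_of_nonneg (sq_nonneg _)]
    exact le_trans (sq_im_le _) (normSq_ent_le x 0)) hc2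
  have hb3 : Integrable f3 μ := hb f3 (fun x => by
    rw [Real.norm_eq_abs, abs_of_nonneg (sq_nonneg _)]
    exact le_trans (sq_re_le _) (normSq_ent_le x 1)) hc3
  have hb4 : Integrable f4 μ := hb f4 (fun x => by
    rw [Real.norm_eq_abs, abs_of_nonneg (sq_nonneg _)]
    exact le_trans (sq_im_le _) (normSq_ent_le x 1)) hc4
  have hg2a : ∀ x : SU2, ent 0 0 (g2 * x) = Complex.I * ent 0 0 x := by
    intro x; rw [ent_mul]
    simp [g2, ent]
  have hg2b : ∀ x : SU2, ent 0 1 (g2 * x) = Complex.I * ent 0 1 x := by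
    intro x; rw [ent_mul]
    simp [g2, ent]
  have hg3a : ∀ x : SU2, ent 0 0 (g3 * x) = - starRingEnd ℂ (ent 0 1 x) := by
    intro x; rw [ent_mul]
    have := (su2_entries x).2
    simp [g3, ent] at this ⊢
    rw [← this]
  have h12 : ∫ x, f2 x ∂μ = ∫ x, f1 x ∂μ := by
    have h := integral_mul_left_eq_self (μ := μ) f1 g2
    rw [show (fun x : SU2 => f1 (g2 * x)) = f2 from funext fun x => by
      simp only [hf1, hf2, hg2a x, Complex.mul_re, Complex.I_re, Complex.I_im]
      ring] at h
    exact h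
  have h34 : ∫ x, f4 x ∂μ = ∫ x, f3 x ∂μ := by
    have h := integral_mul_left_eq_self (μ := μ) f3 g2
    rw [show (fun x : SU2 => f3 (g2 * x)) = f4 from funext fun x => by
      simp only [hf3, hf4, hg2b x, Complex.mul_re, Complex.I_re, Complex.I_im]
      ring] at h
    exact h
  have h13 : ∫ x, f3 x ∂μ = ∫ x, f1 x ∂μ := by
    have h := integral_mul_left_eq_self (μ := μ) f1 g3
    rw [show (fun x : SU2 => f1 (g3 * x)) = f3 from funext fun x => by
      simp only [hf1, hf3, hg3a x, Complex.neg_re, Complex.conj_re]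
      ring] at h
    exact h
  have hsum : ∫ x, (f1 x + f2 x + f3 x + f4 x) ∂μ = 1 := by
    have : (fun x : SU2 => f1 x + f2 x + f3 x + f4 x) = fun _ => (1 : ℝ) := by
      funext x
      have := su2_norm_row x
      simp only [hf1, hf2, hf3, hf4, Complex.normSq_apply] at this ⊢
      nlinarith [this]
    rw [this, integral_const]; simp
  have e1 : ∫ x, (f1 x + f2 x + f3 x + f4 x) ∂μ
      = ((∫ x, f1 x ∂μ) + (∫ x, f2 x ∂μ) + (∫ x, f3 x ∂μ)) + ∫ x, f4 x ∂μ := by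
    have hb12 : Integrable (fun x => f1 x + f2 x) μ := hb1.add hb2
    have hb123 : Integrable (fun x => f1 x + f2 x + f3 x) μ := hb12.add hb3
    rw [integral_add hb123 hb4, integral_add hb12 hb3, integral_add hb1 hb2]
  rw [e1] at hsum
  have hint1 : ∫ x, f1 x ∂μ = 1 / 4 := by
    rw [h12, h13, h34, h13] at hsum; linarith
  have : (fun x : SU2 => rtr x ^ 2) = fun x => 4 * f1 x := by
    funext x; rw [rtr_eq x]; simp only [hf1]; ring
  rw [this, integral_const_mul, hint1]; norm_num

lemma integral_finset_prod_of_indep {Ω ι : Type*} [MeasurableSpace Ω] {P : Measure Ω}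
    [IsProbabilityMeasure P] {f : ι → Ω → ℝ}
    (hindep : iIndepFun f P)
    (hmeas : ∀ i, Measurable (f i)) (s : Finset ι) :
    ∫ ω, ∏ i ∈ s, f i ω ∂P = ∏ i ∈ s, ∫ ω, f i ω ∂P := by
  classical
  induction s using Finset.induction_on with
  | empty => simp
  | @insert i s hi ih =>
    have hip : IndepFun (fun ω => ∏ j ∈ s, f j ω) (f i) P := by
      have h := hindep.indepFun_finsetProd_of_notMem hmeas hi
      rwa [show (∏ j ∈ s, f j) = fun ω => ∏ j ∈ s, f j ω from
        funext fun ω => Finset.prod_apply ω s f] at h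
    have hprodmeas : Measurable (fun ω => ∏ j ∈ s, f j ω) :=
      Finset.measurable_prod s fun j _ => hmeas j
    rw [Finset.prod_insert hi, ← ih]
    have := hip.symm.integral_fun_mul_eq_mul_integral (hmeas i).aestronglyMeasurable
      hprodmeas.aestronglyMeasurable
    rw [show (fun ω => ∏ j ∈ insert i s, f j ω)
        = fun ω => f i ω * ∏ j ∈ s, f j ω from funext fun ω => Finset.prod_insert hi]
    exact this

lemma chebU_one (t : ℝ) : chebU 1 t = t := by
  unfold chebU
  simp [Polynomial.Chebyshev.U_one]
  ring

lemma Yn_squarefree (x : ℕ → SU2) {n : ℕ} (hn : Squarefree n) :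
    Yn x n = ∏ p ∈ n.primeFactors, rtr (x p) := by
  unfold Yn
  refine Finset.prod_congr rfl fun p hp => ?_
  have h1 : n.factorization p ≤ 1 := by
    rcases Nat.eq_zero_or_pos n with h | h
    · simp [h]
    exact (Nat.squarefree_iff_factorization_le_one h.ne').mp hn p
  have h2 : n.factorization p ≠ 0 := by
    rw [← Nat.support_factorization] at hp
    exact Finsupp.mem_support_iff.mp hp
  rw [show n.factorization p = 1 by omega, chebU_one]
/-- Orthonormality: for squarefree `n`, `m`, `E(Y_n Y_m) = 1` if `n = m` and `0` otherwise. -/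
theorem statement7
    {Ω : Type*} [MeasurableSpace Ω] (P : Measure Ω) [IsProbabilityMeasure P]
    (X : ℕ → Ω → SU2) (hXm : ∀ p, Measurable (X p))
    (hindep : iIndepFun (fun p : Nat.Primes => X p) P)
    (μ : Measure SU2) (hHaar : μ.IsHaarMeasure) (hμprob : IsProbabilityMeasure μ)
    (hdist : ∀ p : ℕ, p.Prime → Measure.map (X p) P = μ)
    (n m : ℕ) (hn : Squarefree n) (hm : Squarefree m) :
    ∫ ω, Yn (fun p => X p ω) n * Yn (fun p => X p ω) m ∂P = if n = m then 1 else 0 := by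
  classical
  have hrtrm : Measurable rtr := rtr_continuous.measurable
  set t : Finset ℕ := n.primeFactors ∪ m.primeFactors with ht
  set F : ℕ → SU2 → ℝ := fun p y =>
    (if p ∈ n.primeFactors then rtr y else 1) * (if p ∈ m.primeFactors then rtr y else 1)
    with hF
  have hFmeas : ∀ p, Measurable (F p) := by
    intro p
    apply Measurable.mul <;> split_ifs <;> first | exact hrtrm | exact measurable_const
  -- pointwise identity
  have hYeq : ∀ x : ℕ → SU2, Yn x n * Yn x m = ∏ p ∈ t, F p (x p) := by
    intro x
    rw [Yn_squarefree x hn, Yn_squarefree x hm, hF, ht]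
    rw [Finset.prod_mul_distrib, Finset.prod_ite_mem, Finset.prod_ite_mem,
      show (n.primeFactors ∪ m.primeFactors) ∩ n.primeFactors = n.primeFactors from
        Finset.inter_eq_right.mpr Finset.subset_union_left,
      show (n.primeFactors ∪ m.primeFactors) ∩ m.primeFactors = m.primeFactors from
        Finset.inter_eq_right.mpr Finset.subset_union_right]
  -- pass to primes index
  set s : Finset Nat.Primes := t.subtype Nat.Prime with hs
  have hts : ∀ x : ℕ → SU2, ∏ p ∈ t, F p (x p) = ∏ q ∈ s, F q.1 (x q.1) := by
    intro x
    have hprime : ∀ p ∈ t, p.Prime := fun p hp => by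
      rcases Finset.mem_union.mp hp with h | h
      exacts [Nat.prime_of_mem_primeFactors h, Nat.prime_of_mem_primeFactors h]
    calc ∏ p ∈ t, F p (x p)
        = ∏ p ∈ t.filter Nat.Prime, F p (x p) := by
          rw [Finset.filter_true_of_mem hprime]
      _ = ∏ q ∈ s, F q.1 (x q.1) :=
          (Finset.prod_subtype_eq_prod_filter (fun p => F p (x p)) (s := t)).symm
  -- independence of composed variables
  have hGindep : iIndepFun
      (fun q : Nat.Primes => fun ω => F q.1 (X q.1 ω)) P :=
    hindep.comp (fun q => F q.1) (fun q => hFmeas q.1)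
  have key : ∫ ω, Yn (fun p => X p ω) n * Yn (fun p => X p ω) m ∂P
      = ∏ q ∈ s, ∫ ω, F q.1 (X q.1 ω) ∂P := by
    rw [show (fun ω => Yn (fun p => X p ω) n * Yn (fun p => X p ω) m)
        = fun ω => ∏ q ∈ s, F q.1 (X q.1 ω) from funext fun ω => by
      rw [hYeq, hts]]
    exact integral_finset_prod_of_indep hGindep (fun q => (hFmeas q.1).comp (hXm q.1)) s
  -- each single integral
  have hsingle : ∀ q : Nat.Primes, ∫ ω, F q.1 (X q.1 ω) ∂P = ∫ y, F q.1 y ∂μ := by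
    intro q
    rw [← hdist q.1 q.2, integral_map (hXm q.1).aemeasurable
      (hFmeas q.1).aestronglyMeasurable]
  have hval : ∀ q : Nat.Primes, ∫ y, F q.1 y ∂μ =
      if q.1 ∈ n.primeFactors ∧ q.1 ∈ m.primeFactors then 1
      else if q.1 ∈ n.primeFactors ∨ q.1 ∈ m.primeFactors then 0
      else 1 := by
    intro q
    by_cases h1 : q.1 ∈ n.primeFactors <;> by_cases h2 : q.1 ∈ m.primeFactors
    · rw [if_pos ⟨h1, h2⟩]
      rw [show (fun y => F q.1 y) = fun y => rtr y ^ 2 from funext fun y => by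
        simp only [hF, if_pos h1, if_pos h2]; ring]
      exact integral_rtr_sq_eq_one μ hHaar
    · rw [if_neg (by tauto), if_pos (Or.inl h1)]
      rw [show (fun y => F q.1 y) = rtr from funext fun y => by
        simp only [hF, if_pos h1, if_neg h2, mul_one]]
      exact integral_rtr_eq_zero μ hHaar
    · rw [if_neg (by tauto), if_pos (Or.inr h2)]
      rw [show (fun y => F q.1 y) = rtr from funext fun y => by
        simp only [hF, if_neg h1, if_pos h2, one_mul]]
      exact integral_rtr_eq_zero μ hHaar
    · rw [if_neg (by tauto), if_neg (by tauto)]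
      rw [show (fun y => F q.1 y) = fun _ => (1 : ℝ) from funext fun y => by
        simp only [hF, if_neg h1, if_neg h2, mul_one]]
      simp
  rw [key]
  by_cases hnm : n = m
  · subst hnm
    rw [if_pos rfl]
    refine Finset.prod_eq_one fun q hq => ?_
    have hqt : q.1 ∈ t := by
      have := Finset.mem_subtype.mp hq; exact this
    have hqn : q.1 ∈ n.primeFactors := by
      simpa [ht, Finset.union_idempotent] using hqt
    rw [hsingle, hval, if_pos ⟨hqn, hqn⟩]
  · rw [if_neg hnm]
    have hne : n.primeFactors ≠ m.primeFactors := by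
      intro h
      apply hnm
      rw [← Nat.prod_primeFactors_of_squarefree hn, ← Nat.prod_primeFactors_of_squarefree hm, h]
    obtain ⟨p, hp⟩ : ∃ p, ¬(p ∈ n.primeFactors ↔ p ∈ m.primeFactors) := by
      by_contra h
      push_neg at h
      exact hne (Finset.ext fun a => h a)
    have hor : p ∈ n.primeFactors ∨ p ∈ m.primeFactors := by tauto
    have hnand : ¬(p ∈ n.primeFactors ∧ p ∈ m.primeFactors) := by tauto
    have hpt : p ∈ t := by
      rw [ht, Finset.mem_union]; tauto
    have hpp : p.Prime := by
      rcases hor with h | h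
      exacts [Nat.prime_of_mem_primeFactors h, Nat.prime_of_mem_primeFactors h]
    refine Finset.prod_eq_zero (i := (⟨p, hpp⟩ : Nat.Primes)) (Finset.mem_subtype.mpr hpt) ?_
    rw [hsingle ⟨p, hpp⟩, hval ⟨p, hpp⟩]
    exact (if_neg hnand).trans (if_pos hor)
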